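/- arXiv:1605.09575 — 2 statements merged into one kernel-verified Lean document; each statement's English description precedes it below -/
import Mathlib

section
/- Let λ be a special type B partition of 2n+1. Take the padded column list of λ (padded with zeros to even length); repeatedly delete two equal adjacent entries occupying positions 2t+1 and 2t until no such pair remains; then repeatedly delete two equal adjacent entries of even value occupying positions 2t and 2t−1 until no such pair remains. Then the last entry of the resulting list equals 0 and every other entry of the resulting list is odd. (This is the assertion, implicit in Propositions 2.4 and 3.2 of the paper, that the reduced column string a''_{2q+1} ≥ a''_{2q} ≥ ⋯ ≥ a''_0 of a special orbit of SO(2n+1,ℂ), obtained after separating the ν column pairs and the even μ column pairs, consists of odd numbers together with a''_0 = 0.) -/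
/-- `l` is a partition of `N`: a weakly decreasing list of positive integers with sum `N`. -/
def IsPartitionOf (N : ℕ) (l : List ℕ) : Prop :=
  l.Pairwise (· ≥ ·) ∧ (∀ x ∈ l, 0 < x) ∧ l.sum = N

/-- the `j`-th column length `c_j(λ) = #{i : λ_i ≥ j}`. -/
def colLen (l : List ℕ) (j : ℕ) : ℕ := l.countP (fun x => decide (j ≤ x))

/-- the transpose partition, as the list `c_1 ≥ c_2 ≥ ⋯ ≥ c_{λ_1}` of column lengths. -/
def transposeList (l : List ℕ) : List ℕ :=
  (List.range (l.foldr max 0)).map (fun j => colLen l (j + 1))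

/-- pad a list with one zero at the end if necessary so that its length is even. -/
def padToEven (c : List ℕ) : List ℕ := if Even c.length then c else c ++ [0]

/-- Delete two equal adjacent entries occupying positions `2t+1` and `2t` for some `t ≥ 0`
(positions in a list of length `m` are numbered `m-1, …, 1, 0` from first to last). -/
def delStepE (L L' : List ℕ) : Prop :=
  ∃ (a : ℕ) (l₁ l₂ : List ℕ), Even l₂.length ∧ L = l₁ ++ a :: a :: l₂ ∧ L' = l₁ ++ l₂

/-- Delete two equal adjacent entries of even value at positions `2t` and `2t-1`, `t ≥ 1`. -/
def delStepOEvenVal (L L' : List ℕ) : Prop :=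
  ∃ (a : ℕ) (l₁ l₂ : List ℕ),
    Even a ∧ Odd l₂.length ∧ L = l₁ ++ a :: a :: l₂ ∧ L' = l₁ ++ l₂

/-! ### Auxiliary machinery -/

/-- a generic deletion step: delete two equal adjacent entries anywhere. -/
def GStep (L L' : List ℕ) : Prop :=
  ∃ (a : ℕ) (l₁ l₂ : List ℕ), L = l₁ ++ a :: a :: l₂ ∧ L' = l₁ ++ l₂

lemma delStepE_gstep {L L'} (h : delStepE L L') : GStep L L' := by
  obtain ⟨a, l₁, l₂, _, h1, h2⟩ := h; exact ⟨a, l₁, l₂, h1, h2⟩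

lemma delStepO_gstep {L L'} (h : delStepOEvenVal L L') : GStep L L' := by
  obtain ⟨a, l₁, l₂, _, _, h1, h2⟩ := h; exact ⟨a, l₁, l₂, h1, h2⟩

lemma gstep_sublist {L L'} (h : GStep L L') : L'.Sublist L := by
  obtain ⟨a, l₁, l₂, h1, h2⟩ := h
  subst h1; subst h2
  exact (l₂.sublist_cons_self a |>.trans (l₂.cons a |>.sublist_cons_self a)).append_left l₁

lemma gstep_count {L L'} (h : GStep L L') (e : ℕ) : L'.count e % 2 = L.count e % 2 := by
  obtain ⟨a, l₁, l₂, h1, h2⟩ := h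
  subst h1; subst h2
  simp [List.count_append, List.count_cons]
  split <;> omega

lemma rtg_sublist {L M} (h : Relation.ReflTransGen GStep L M) : M.Sublist L := by
  induction h with
  | refl => exact List.Sublist.refl _
  | tail _ hs ih => exact (gstep_sublist hs).trans ih

lemma rtg_count {L M} (h : Relation.ReflTransGen GStep L M) (e : ℕ) :
    M.count e % 2 = L.count e % 2 := by
  induction h with
  | refl => rfl
  | tail _ hs ih => rw [gstep_count hs, ih]

/-- stuck-E is preserved by any generic step on a sorted list. -/
lemma noE_preserved {L L' : List ℕ} (hs : L.Pairwise (· ≥ ·))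
    (hE : ∀ M', ¬ delStepE L M') (h : GStep L L') : ∀ M', ¬ delStepE L' M' := by
  rintro M' ⟨b, m₁, m₂, hm2, hsplit, -⟩
  obtain ⟨a, l₁, l₂, h1, h2⟩ := h
  subst h1
  rw [h2] at hsplit
  rcases List.append_eq_append_iff.mp hsplit with ⟨r, hr1, hr2⟩ | ⟨r, hr1, hr2⟩
  · exact hE (l₁ ++ (a :: a :: r) ++ m₂)
      ⟨b, l₁ ++ a :: a :: r, m₂, hm2, by simp [hr2], rfl⟩
  · rcases r with _ | ⟨x, _ | ⟨y, r'⟩⟩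
    · simp only [List.nil_append] at hr2
      exact hE ((m₁ ++ [a, a]) ++ m₂)
        ⟨b, m₁ ++ [a, a], m₂, hm2, by simp [hr1, ← hr2], rfl⟩
    · simp only [List.cons_append, List.nil_append] at hr2
      injection hr2 with hx hl2
      subst hx
      have hL : l₁ ++ a :: a :: l₂ = m₁ ++ b :: a :: a :: b :: m₂ := by
        simp [hr1, ← hl2]
      rw [hL] at hs
      have hab : a = b := by
        rw [List.pairwise_append] at hs
        have h1 := hs.2.1
        simp only [List.pairwise_cons] at h1
        have hba : b ≥ a := h1.1 a (by simp)
        have hab' : a ≥ b := h1.2.1 b (by simp)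
        omega
      subst hab
      exact hE (m₁ ++ (a :: a :: m₂))
        ⟨a, m₁, a :: a :: m₂,
          by simp only [List.length_cons]; rcases hm2 with ⟨k, hk⟩; exact ⟨k + 1, by omega⟩,
          by rw [hL], rfl⟩
    · simp only [List.cons_append] at hr2
      injection hr2 with hx hr2'
      injection hr2' with hy hm2'
      subst hx; subst hy
      have hlen : Even (r' ++ a :: a :: l₂).length := by
        have hlm : m₂.length = r'.length + l₂.length := by rw [hm2']; simp
        simp only [List.length_append, List.length_cons]
        rcases hm2 with ⟨k, hk⟩
        exact ⟨k + 1, by omega⟩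
      exact hE (m₁ ++ (r' ++ a :: a :: l₂))
        ⟨b, m₁, r' ++ a :: a :: l₂, hlen, by simp [hr1], rfl⟩

/-- in a sorted list, two copies of the same value are adjacent somewhere. -/
lemma two_adj : ∀ (L : List ℕ), L.Pairwise (· ≥ ·) → ∀ a, 2 ≤ L.count a →
    ∃ p q, L = p ++ a :: a :: q := by
  intro L
  induction L with
  | nil => intro _ a h; simp at h
  | cons x t ih =>
    intro hs a h
    rcases eq_or_ne x a with rfl | hne
    · have hmem : x ∈ t := by
        have h1 : 1 ≤ t.count x := by
          rw [List.count_cons] at h; simp only [beq_self_eq_true, if_true] at h; omega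
        exact List.count_pos_iff.mp h1
      rcases t with _ | ⟨y, t'⟩
      · simp at hmem
      · have hy : y = x := by
          have h1 : x ≥ y := (List.pairwise_cons.mp hs).1 y (by simp)
          have h2 : y ≥ x := by
            rcases List.mem_cons.mp hmem with rfl | hmem'
            · exact le_refl _
            · exact (List.pairwise_cons.mp (List.pairwise_cons.mp hs).2).1 x hmem'
          omega
        subst hy
        exact ⟨[], t', rfl⟩
    · have h2 : 2 ≤ t.count a := by
        rw [List.count_cons] at h
        simp [hne] at h
        omega
      obtain ⟨p, q, hpq⟩ := ih (List.pairwise_cons.mp hs).2 a h2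
      exact ⟨x :: p, q, by simp [hpq]⟩

lemma even_length_of_counts (l : List ℕ) (h : ∀ a ∈ l, Even (l.count a)) :
    Even l.length := by
  rw [← Multiset.coe_card, ← Multiset.toFinset_sum_count_eq]
  apply Finset.even_sum
  intro a ha
  simpa using h a (by simpa using ha)

lemma sum_mod_two (l : List ℕ) :
    l.sum % 2 = l.countP (fun x => x % 2 == 1) % 2 := by
  induction l with
  | nil => rfl
  | cons a t ih =>
    simp only [List.sum_cons, List.countP_cons]
    rcases Nat.mod_two_eq_zero_or_one a with h | h <;> simp [h] <;> omega

lemma min_sum (a : ℕ) : ∀ m, (∑ j ∈ Finset.range m, if j < a then 1 else 0) = min a m := by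
  intro m
  induction m with
  | zero => simp
  | succ m ih =>
    rw [Finset.sum_range_succ, ih]
    simp only [min_def]; split_ifs <;> omega

lemma list_range_sum (m : ℕ) (f : ℕ → ℕ) :
    ((List.range m).map f).sum = ∑ j ∈ Finset.range m, f j := by
  rfl

lemma transpose_sum (m : ℕ) : ∀ (l : List ℕ), (∀ x ∈ l, x ≤ m) →
    ((List.range m).map (fun j => l.countP (fun x => decide (j + 1 ≤ x)))).sum = l.sum := by
  intro l
  induction l with
  | nil => intro _; simp
  | cons a t ih =>
    intro hb
    have hrec := ih (fun x hx => hb x (by simp [hx]))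
    simp only [List.countP_cons]
    rw [list_range_sum] at hrec ⊢
    rw [Finset.sum_add_distrib, hrec]
    have key : (∑ j ∈ Finset.range m, if (decide (j + 1 ≤ a)) = true then 1 else 0) = a := by
      have ham : a ≤ m := hb a (by simp)
      have e1 : (∑ j ∈ Finset.range m, if (decide (j + 1 ≤ a)) = true then 1 else 0)
          = ∑ j ∈ Finset.range m, if j < a then 1 else 0 := by
        apply Finset.sum_congr rfl
        intro j _
        simp only [decide_eq_true_eq]
        congr 1
      rw [e1, min_sum]
      omega
    rw [key, List.sum_cons]
    omega

lemma length_eq_odd_add_even (l : List ℕ) :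
    l.length = l.countP (fun x => x % 2 == 1) + l.countP (fun x => x % 2 == 0) := by
  induction l with
  | nil => rfl
  | cons a t ih =>
    simp only [List.length_cons, List.countP_cons]
    rcases Nat.mod_two_eq_zero_or_one a with h | h <;> simp [h] <;> omega

lemma foldr_max_mem : ∀ (l : List ℕ), l.foldr max 0 = 0 ∨ l.foldr max 0 ∈ l := by
  intro l
  induction l with
  | nil => left; rfl
  | cons a t ih =>
    simp only [List.foldr_cons]
    rcases le_total a (t.foldr max 0) with h | h
    · rcases ih with h0 | hm
      · rw [h0] at h ⊢
        right
        have ha0 : a = 0 := Nat.le_zero.mp h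
        simp [ha0]
      · right; rw [max_eq_right h]; exact List.mem_cons_of_mem _ hm
    · right; rw [max_eq_left h]; simp

lemma le_foldr_max : ∀ (l : List ℕ) (x : ℕ), x ∈ l → x ≤ l.foldr max 0 := by
  intro l
  induction l with
  | nil => simp
  | cons a t ih =>
    intro x hx
    simp only [List.foldr_cons]
    rcases List.mem_cons.mp hx with rfl | h
    · exact le_max_left _ _
    · exact (ih x h).trans (le_max_right _ _)

/-- Let `l` be a special type B partition of `2n+1`.  Take the padded column list of `l`
(padded with zeros to even length); repeatedly delete two equal adjacent entries at
positions `2t+1` and `2t` until no such pair remains; then repeatedly delete two equal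
adjacent entries of even value at positions `2t` and `2t-1` until no such pair remains.
Then the last entry of the resulting list equals `0` and every other entry is odd. -/
theorem typeB_reducedColumnString_odd (n : ℕ) (l : List ℕ)
    (hpart : IsPartitionOf (2 * n + 1) l)
    (hB : ∀ e ∈ l, Even e → Even (l.count e))
    (hspecial : ∀ e ∈ transposeList l, Even e → Even ((transposeList l).count e)) :
    ∀ M₁ M₂ : List ℕ,
      Relation.ReflTransGen delStepE (padToEven (transposeList l)) M₁ →
      (∀ M', ¬ delStepE M₁ M') →
      Relation.ReflTransGen delStepOEvenVal M₁ M₂ →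
      (∀ M', ¬ delStepOEvenVal M₂ M') →
      M₂.getLast? = some 0 ∧ ∀ x ∈ M₂.dropLast, Odd x := by
  obtain ⟨-, hpos, hsum⟩ := hpart
  set T := transposeList l with hT
  set m := l.foldr max 0 with hm
  -- l is nonempty
  have hlne : l ≠ [] := by
    intro h; rw [h] at hsum; simp at hsum
  -- the maximum is attained
  have hm_mem : m ∈ l := by
    rcases foldr_max_mem l with h0 | hmem
    · exfalso
      obtain ⟨x, hx⟩ := List.exists_mem_of_ne_nil l hlne
      have h1 := le_foldr_max l x hx
      have h2 := hpos x hx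
      omega
    · exact hmem
  -- entries of T are positive
  have hTpos : ∀ e ∈ T, 0 < e := by
    intro e he
    rw [hT, transposeList] at he
    obtain ⟨j, hj, hje⟩ := List.mem_map.mp he
    rw [← hje]
    rw [colLen]
    rw [List.countP_pos_iff]
    exact ⟨m, hm_mem, by
      simp only [decide_eq_true_eq]
      have := List.mem_range.mp hj
      omega⟩
  have hT0 : (0 : ℕ) ∉ T := fun h => by simpa using hTpos 0 h
  -- T is sorted
  have hTsorted : T.Pairwise (· ≥ ·) := by
    rw [hT, transposeList, List.pairwise_map]
    apply (List.pairwise_lt_range).imp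
    intro i j hij
    apply List.countP_mono_left
    intro x _ hx
    simp only [decide_eq_true_eq] at hx ⊢
    omega
  -- sum of T
  have hTsum : T.sum = 2 * n + 1 := by
    rw [hT, transposeList]
    rw [show (fun j => colLen l (j + 1)) = fun j => l.countP (fun x => decide (j + 1 ≤ x)) from rfl]
    rw [transpose_sum m l (fun x hx => le_foldr_max l x hx)]
    exact hsum
  -- T has odd length
  have hTlen : ¬ Even T.length := by
    have h1 := length_eq_odd_add_even T
    have h2 : Even (T.countP (fun x => x % 2 == 0)) := by
      rw [List.countP_eq_length_filter]
      apply even_length_of_counts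
      intro a ha
      have hmem := List.mem_of_mem_filter ha
      have haP := List.of_mem_filter ha
      have haeven : Even a := by
        simp only [beq_iff_eq] at haP
        exact Nat.even_iff.mpr haP
      rw [List.count_filter (p := fun x => x % 2 == 0) haP]
      exact hspecial a hmem haeven
    have h3 := sum_mod_two T
    rw [hTsum] at h3
    intro hEv
    rcases hEv with ⟨u, hu⟩
    rcases h2 with ⟨k, hk⟩
    omega
  -- the padded list C
  have hC : padToEven T = T ++ [0] := by
    rw [padToEven, if_neg hTlen]
  set C := T ++ [0] with hCdef
  have hCsorted : C.Pairwise (· ≥ ·) := by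
    rw [hCdef, List.pairwise_append]
    exact ⟨hTsorted, by simp, fun a _ b hb => by simp at hb; omega⟩
  have hC0 : C.count 0 = 1 := by
    rw [hCdef, List.count_append, List.count_eq_zero.mpr hT0]
    simp
  have hCeven : ∀ e : ℕ, 0 < e → Even e → Even (C.count e) := by
    intro e he heven
    have : C.count e = T.count e := by
      rw [hCdef, List.count_append]
      have : List.count e [0] = 0 := by
        rw [List.count_eq_zero]
        simp; omega
      omega
    rw [this]
    by_cases hmem : e ∈ T
    · exact hspecial e hmem heven
    · rw [List.count_eq_zero.mpr hmem]; exact Even.zero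
  -- main argument
  intro M₁ M₂ h1 h2 h3 h4
  rw [hC] at h1
  have g1 : Relation.ReflTransGen GStep C M₁ := Relation.ReflTransGen.mono (r := delStepE) (p := GStep) (fun _ _ h => delStepE_gstep h) _ _ h1
  have sub1 : M₁.Sublist C := rtg_sublist g1
  -- M₂ is stuck under delStepE
  have stuckE2 : ∀ M', ¬ delStepE M₂ M' := by
    clear h4
    induction h3 with
    | refl => exact h2
    | tail hs hstep ih =>
        have hsorted : _ := hCsorted.sublist
          ((rtg_sublist (Relation.ReflTransGen.mono (r := delStepOEvenVal) (p := GStep) (fun _ _ h => delStepO_gstep h) _ _ hs)).trans sub1)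
        exact noE_preserved hsorted ih (delStepO_gstep hstep)
  have g2 : Relation.ReflTransGen GStep M₁ M₂ := Relation.ReflTransGen.mono (r := delStepOEvenVal) (p := GStep) (fun _ _ h => delStepO_gstep h) _ _ h3
  have subC : M₂.Sublist C := (rtg_sublist g2).trans sub1
  have hM2sorted : M₂.Pairwise (· ≥ ·) := hCsorted.sublist subC
  -- count parities
  have hcount : ∀ e, M₂.count e % 2 = C.count e % 2 := rtg_count (g1.trans g2)
  -- 0 ∈ M₂
  have h0mem : (0 : ℕ) ∈ M₂ := by
    rw [← List.count_pos_iff]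
    have := hcount 0
    rw [hC0] at this
    omega
  have hM2ne : M₂ ≠ [] := fun h => by rw [h] at h0mem; simp at h0mem
  have hdec : M₂.dropLast ++ [M₂.getLast hM2ne] = M₂ := List.dropLast_append_getLast hM2ne
  have hge : ∀ x ∈ M₂.dropLast, x ≥ M₂.getLast hM2ne := by
    have hs := hM2sorted
    rw [← hdec, List.pairwise_append] at hs
    intro x hx
    exact hs.2.2 x hx _ (by simp)
  have hcount0 : M₂.count 0 ≤ 1 := by
    have := subC.count_le 0
    omega
  have hlast : M₂.getLast hM2ne = 0 := by
    rw [← hdec] at h0mem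
    rcases List.mem_append.mp h0mem with h | h
    · have := hge 0 h; omega
    · exact (List.mem_singleton.mp h).symm
  constructor
  · rw [List.getLast?_eq_getLast hM2ne, hlast]
  · intro x hx
    by_contra hodd
    have hxeven : Even x := Nat.not_odd_iff_even.mp hodd
    have hxmem : x ∈ M₂ := (List.dropLast_sublist M₂).subset hx
    rcases Nat.eq_zero_or_pos x with rfl | hxpos
    · -- two zeros: contradiction with count ≤ 1
      have hc1 : 1 ≤ M₂.dropLast.count 0 := List.count_pos_iff.mpr hx
      have e1 : M₂.count 0 = M₂.dropLast.count 0 + List.count 0 [M₂.getLast hM2ne] := by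
        conv_lhs => rw [← hdec]
        rw [List.count_append]
      rw [hlast] at e1
      simp [List.count_singleton] at e1
      omega
    · -- positive even entry: contradiction with stuckness
      have hce : Even (C.count x) := hCeven x hxpos hxeven
      have hc2 : 2 ≤ M₂.count x := by
        have h1 : 1 ≤ M₂.count x := List.count_pos_iff.mpr hxmem
        have h2 := hcount x
        rcases hce with ⟨k, hk⟩
        omega
      obtain ⟨p, q, hpq⟩ := two_adj M₂ hM2sorted x hc2
      rcases Nat.even_or_odd q.length with hq | hq
      · exact stuckE2 (p ++ q) ⟨x, p, q, hq, hpq, rfl⟩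
      · exact h4 (p ++ q) ⟨x, p, q, hxeven, hq, hpq, rfl⟩
end

section
/- Let λ be a special type D partition of 2n. Take the padded column list of λ (padded with zeros to even length); repeatedly delete two equal adjacent entries occupying positions 2t+1 and 2t until no such pair remains; then repeatedly delete two equal adjacent entries of odd value occupying positions 2t and 2t−1 until no such pair remains. Then every entry of the resulting list is even. (This is the assertion, implicit in Propositions 2.4 and 3.2 of the paper, that the reduced column string a''_{2q+1} ≥ a''_{2q} ≥ ⋯ ≥ a''_0 of a special orbit of SO(2n,ℂ), obtained after separating the ν column pairs and the odd μ column pairs, consists entirely of even numbers.) -/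
/-- Delete two equal adjacent entries of odd value at positions `2t` and `2t-1`, `t ≥ 1`. -/
def delStepOOddVal (L L' : List ℕ) : Prop :=
  ∃ (a : ℕ) (l₁ l₂ : List ℕ),
    Odd a ∧ Odd l₂.length ∧ L = l₁ ++ a :: a :: l₂ ∧ L' = l₁ ++ l₂

private lemma sorted_split {L : List ℕ} (hs : L.Pairwise (· ≥ ·)) {a : ℕ} (ha : a ∈ L) :
    ∃ P S, L = P ++ List.replicate (L.count a) a ++ S ∧ (∀ x ∈ P, a < x) ∧ (∀ x ∈ S, x < a) := by
  induction L with
  | nil => simp at ha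
  | cons b T ih =>
    rw [List.pairwise_cons] at hs
    obtain ⟨hb, hT⟩ := hs
    rcases eq_or_ne b a with rfl | hba
    · by_cases hmem : b ∈ T
      · obtain ⟨P, S, hdec, hP, hS⟩ := ih hT hmem
        have hPnil : P = [] := by
          rcases P with _ | ⟨x, P⟩
          · rfl
          · exfalso
            have hx : x ∈ T := by rw [hdec]; simp
            exact absurd (hb x hx) (not_le.mpr (hP x (by simp)))
        subst hPnil
        simp only [List.nil_append] at hdec
        refine ⟨[], S, ?_, by simp, hS⟩
        have hcS : List.count b S = 0 :=
          List.count_eq_zero.mpr (fun h => absurd (hS b h) (lt_irrefl b))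
        rw [List.count_cons_self, hdec]
        simp [List.replicate_succ, hcS]
      · refine ⟨[], T, ?_, by simp, ?_⟩
        · rw [List.count_cons_self, List.count_eq_zero_of_not_mem hmem]
          simp [List.replicate]
        · intro x hx
          exact lt_of_le_of_ne (hb x hx) (fun h => hmem (h ▸ hx))
    · have haT : a ∈ T := by
        rcases List.mem_cons.mp ha with h | h
        · exact absurd h.symm hba
        · exact h
      obtain ⟨P, S, hdec, hP, hS⟩ := ih hT haT
      refine ⟨b :: P, S, ?_, ?_, hS⟩
      · have hcP : List.count a P = 0 :=
          List.count_eq_zero.mpr (fun h => absurd (hP a h) (lt_irrefl a))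
        have hcS : List.count a S = 0 :=
          List.count_eq_zero.mpr (fun h => absurd (hS a h) (lt_irrefl a))
        rw [List.count_cons_of_ne hba, hdec]
        simp [hcP, hcS]
      · intro x hx
        rcases List.mem_cons.mp hx with rfl | h
        · exact lt_of_le_of_ne (hb a haT) (Ne.symm hba)
        · exact hP x h

private lemma split_two {L : List ℕ} (hs : L.Pairwise (· ≥ ·)) {a : ℕ} (ha : a ∈ L)
    (hc : L.count a = 2) :
    ∃ P S, L = P ++ a :: a :: S ∧ S.length = L.countP (fun x => decide (x < a)) := by
  obtain ⟨P, S, hdec, hP, hS⟩ := sorted_split hs ha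
  rw [hc] at hdec
  refine ⟨P, S, by simpa using hdec, ?_⟩
  have h1 : P.countP (fun x => decide (x < a)) = 0 :=
    List.countP_eq_zero.mpr (by intro x hx; simpa using not_lt.mpr (le_of_lt (hP x hx)))
  have h2 : S.countP (fun x => decide (x < a)) = S.length :=
    List.countP_eq_length.mpr (by intro x hx; simpa using hS x hx)
  rw [hdec]
  simp [List.countP_append, h1, h2, List.countP_cons]

private def Inv1 (L : List ℕ) : Prop :=
  L.Pairwise (· ≥ ·) ∧ ∀ a, Odd a → Even (L.count a)

private def Inv2 (L : List ℕ) : Prop :=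
  L.Pairwise (· ≥ ·) ∧
    ∀ a, Odd a → a ∈ L → L.count a = 2 ∧ Odd (L.countP (fun x => decide (x < a)))

private lemma sublist_del (l₁ l₂ : List ℕ) (a : ℕ) :
    List.Sublist (l₁ ++ l₂) (l₁ ++ a :: a :: l₂) :=
  (l₂.sublist_cons_self a |>.trans ((a::l₂).sublist_cons_self a)).append_left l₁

private lemma inv1_step {L L' : List ℕ} (h : Inv1 L) (hd : delStepE L L') : Inv1 L' := by
  obtain ⟨a, l₁, l₂, _, rfl, rfl⟩ := hd
  refine ⟨h.1.sublist (sublist_del l₁ l₂ a), fun b hb => ?_⟩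
  have := h.2 b hb
  rcases eq_or_ne b a with rfl | hba
  · simp only [List.count_append, List.count_cons_self] at this ⊢
    rw [Nat.even_iff] at this ⊢
    omega
  · simp only [List.count_append, List.count_cons_of_ne (Ne.symm hba)] at this ⊢
    rw [Nat.even_iff] at this ⊢
    omega

private lemma inv1_terminal {L : List ℕ} (h : Inv1 L) (ht : ∀ M', ¬ delStepE L M') :
    Inv2 L := by
  refine ⟨h.1, fun a ha hmem => ?_⟩
  have hpos : 0 < L.count a := List.count_pos_iff.mpr hmem
  have heven := h.2 a ha
  obtain ⟨P, S, hdec, hP, hS⟩ := sorted_split h.1 hmem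
  -- count ≥ 3 is impossible
  have hlt3 : L.count a < 3 := by
    by_contra h3
    push_neg at h3
    obtain ⟨m, hm⟩ : ∃ m, L.count a = m + 3 := ⟨L.count a - 3, by omega⟩
    rw [hm] at hdec
    have hrep : List.replicate (m + 3) a = a :: a :: a :: List.replicate m a := by
      simp [List.replicate_succ]
    rw [hrep] at hdec
    rcases Nat.even_or_odd (m + S.length) with he | ho
    · refine ht (P ++ [a] ++ (List.replicate m a ++ S))
        ⟨a, P ++ [a], List.replicate m a ++ S, ?_, by simp [hdec], rfl⟩
      rw [Nat.even_iff] at he ⊢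
      simp only [List.length_append, List.length_replicate]
      omega
    · refine ht (P ++ (a :: List.replicate m a ++ S))
        ⟨a, P, a :: List.replicate m a ++ S, ?_, by simp [hdec], rfl⟩
      rw [Nat.odd_iff] at ho
      rw [Nat.even_iff]
      simp only [List.length_append, List.length_cons, List.length_replicate]
      omega
  have hc2 : L.count a = 2 := by
    rcases heven with ⟨k, hk⟩; omega
  refine ⟨hc2, ?_⟩
  obtain ⟨P', S', hdec', hlen⟩ := split_two h.1 hmem hc2
  rcases Nat.even_or_odd (L.countP (fun x => decide (x < a))) with he | ho
  · exact ((ht (P' ++ S')) ⟨a, P', S', by rw [hlen]; exact he, hdec', rfl⟩).elim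
  · exact ho

private lemma inv2_step {L L' : List ℕ} (h : Inv2 L) (hd : delStepOOddVal L L') : Inv2 L' := by
  obtain ⟨a, l₁, l₂, ha, hlen, rfl, rfl⟩ := hd
  have hamem : a ∈ l₁ ++ a :: a :: l₂ := by simp
  obtain ⟨hca, _⟩ := h.2 a ha hamem
  refine ⟨h.1.sublist (sublist_del l₁ l₂ a), fun b hb hbmem => ?_⟩
  have hbmemL : b ∈ l₁ ++ a :: a :: l₂ := (sublist_del l₁ l₂ a).mem hbmem
  obtain ⟨hcb, hob⟩ := h.2 b hb hbmemL
  have hba : b ≠ a := by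
    rintro rfl
    simp only [List.count_append, List.count_cons_self] at hca
    have : (l₁ ++ l₂).count b = 0 := by simp only [List.count_append]; omega
    exact absurd (List.count_pos_iff.mpr hbmem) (by omega)
  constructor
  · simp only [List.count_append, List.count_cons_of_ne (Ne.symm hba)] at hcb ⊢
    omega
  · simp only [List.countP_append, List.countP_cons] at hob ⊢
    by_cases hab : a < b <;>
      simp only [hab, decide_true, decide_false, if_true, if_false] at hob ⊢ <;>
      rw [Nat.odd_iff] at hob ⊢ <;> omega

private lemma inv2_terminal {L : List ℕ} (h : Inv2 L) (ht : ∀ M', ¬ delStepOOddVal L M') :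
    ∀ x ∈ L, Even x := by
  intro x hx
  by_contra hodd
  rw [Nat.not_even_iff_odd] at hodd
  obtain ⟨hc2, ho⟩ := h.2 x hodd hx
  obtain ⟨P, S, hdec, hlen⟩ := split_two h.1 hx hc2
  exact ht (P ++ S) ⟨x, P, S, hodd, by rw [hlen]; exact ho, hdec, rfl⟩

private lemma transposeList_sorted (l : List ℕ) : (transposeList l).Pairwise (· ≥ ·) := by
  unfold transposeList
  rw [List.pairwise_map]
  refine (List.pairwise_lt_range).imp ?_
  intro i j hij
  exact List.countP_mono_left (fun x _ h => by
    simp only [decide_eq_true_eq] at h ⊢; omega)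

private lemma inv1_init (l : List ℕ)
    (hspecial : ∀ e ∈ transposeList l, Odd e → Even ((transposeList l).count e)) :
    Inv1 (padToEven (transposeList l)) := by
  constructor
  · unfold padToEven
    split
    · exact transposeList_sorted l
    · rw [List.pairwise_append]
      refine ⟨transposeList_sorted l, by simp, ?_⟩
      intro x _ y hy
      simp only [List.mem_singleton] at hy
      omega
  · intro a ha
    have ha0 : a ≠ 0 := by rintro rfl; simp [Nat.odd_iff] at ha
    have hcount : (padToEven (transposeList l)).count a = (transposeList l).count a := by
      unfold padToEven
      split
      · rfl
      · rw [List.count_append]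
        simp [List.count_singleton', Ne.symm ha0]
    rw [hcount]
    by_cases hmem : a ∈ transposeList l
    · exact hspecial a hmem ha
    · rw [List.count_eq_zero_of_not_mem hmem]; exact Even.zero

private lemma inv1_rtg {L M : List ℕ} (h : Inv1 L)
    (hr : Relation.ReflTransGen delStepE L M) : Inv1 M := by
  induction hr with
  | refl => exact h
  | tail _ hstep ih => exact inv1_step ih hstep

private lemma inv2_rtg {L M : List ℕ} (h : Inv2 L)
    (hr : Relation.ReflTransGen delStepOOddVal L M) : Inv2 M := by
  induction hr with
  | refl => exact h
  | tail _ hstep ih => exact inv2_step ih hstep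


/-- Let `l` be a special type D partition of `2n`.  Take the padded column list of `l`
(padded with zeros to even length); repeatedly delete two equal adjacent entries at
positions `2t+1` and `2t` until no such pair remains; then repeatedly delete two equal
adjacent entries of odd value at positions `2t` and `2t-1` until no such pair remains.
Then every entry of the resulting list is even. -/
theorem typeD_reducedColumnString_even (n : ℕ) (l : List ℕ)
    (hpart : IsPartitionOf (2 * n) l)
    (hD : ∀ e ∈ l, Even e → Even (l.count e))
    (hspecial : ∀ e ∈ transposeList l, Odd e → Even ((transposeList l).count e)) :
    ∀ M₁ M₂ : List ℕ,
      Relation.ReflTransGen delStepE (padToEven (transposeList l)) M₁ →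
      (∀ M', ¬ delStepE M₁ M') →
      Relation.ReflTransGen delStepOOddVal M₁ M₂ →
      (∀ M', ¬ delStepOOddVal M₂ M') →
      ∀ x ∈ M₂, Even x := by
  intro M₁ M₂ h1 ht1 h2 ht2
  exact inv2_terminal (inv2_rtg (inv1_terminal (inv1_rtg (inv1_init l hspecial) h1) ht1) h2) ht2
end
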